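/- For all x in (0, π/2), x/tan x < e^(-x²/3). -/

import Mathlib

open Real

theorem stmt_4 : ∀ x ∈ Set.Ioo (0:ℝ) (Real.pi/2), x / Real.tan x < Real.exp (-x^2/3) := by
  intro x hx
  obtain ⟨hx0, hxp⟩ := hx
  have hpi := Real.pi_pos
  have hcos : 0 < Real.cos x := Real.cos_pos_of_mem_Ioo ⟨by linarith, hxp⟩
  have hsin : 0 < Real.sin x := Real.sin_pos_of_pos_of_lt_pi hx0 (by linarith)
  -- key inequality: x * cos x ≤ (1 - x^2/3) * sin x
  have key : x * Real.cos x ≤ (1 - x^2/3) * Real.sin x := by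
    set f : ℝ → ℝ := fun t => Real.sin t - t * Real.cos t - t^2/3 * Real.sin t with hf
    have hderiv : ∀ t : ℝ, HasDerivAt f (t/3 * Real.sin t - t^2/3 * Real.cos t) t := by
      intro t
      have h1 := Real.hasDerivAt_sin t
      have h2 : HasDerivAt (fun t : ℝ => t * Real.cos t)
          (1 * Real.cos t + t * (-Real.sin t)) t :=
        (hasDerivAt_id t).mul (Real.hasDerivAt_cos t)
      have h3 : HasDerivAt (fun t : ℝ => t^2/3) (2*t/3) t := by
        have := (hasDerivAt_pow 2 t).div_const 3
        simpa using this
      have h4 := h3.mul (Real.hasDerivAt_sin t)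
      have h5 := (h1.sub h2).sub h4
      exact h5.congr_deriv (by ring)
    have hmono : MonotoneOn f (Set.Icc 0 (Real.pi/2)) := by
      apply monotoneOn_of_deriv_nonneg (convex_Icc _ _)
      · exact Continuous.continuousOn (by fun_prop)
      · intro t ht
        exact (hderiv t).differentiableAt.differentiableWithinAt
      · intro t ht
        rw [interior_Icc] at ht
        obtain ⟨ht0, htp⟩ := ht
        rw [(hderiv t).deriv]
        have hcost : 0 < Real.cos t := Real.cos_pos_of_mem_Ioo ⟨by linarith, htp⟩
        have htan : t < Real.tan t := Real.lt_tan ht0 htp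
        rw [Real.tan_eq_sin_div_cos] at htan
        have : t * Real.cos t < Real.sin t := by
          rwa [lt_div_iff₀ hcost] at htan
        nlinarith
    have h0 : f 0 ≤ f x :=
      hmono (Set.left_mem_Icc.2 (by positivity)) ⟨hx0.le, hxp.le⟩ hx0.le
    simp only [hf, Real.sin_zero, Real.cos_zero, mul_zero, zero_mul, mul_one, sub_zero,
      zero_sub, neg_zero, ne_eq] at h0
    nlinarith [h0]
  have hexp : 1 - x^2/3 < Real.exp (-x^2/3) := by
    have h := Real.add_one_lt_exp (x := -x^2/3) (by nlinarith)
    linarith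
  rw [Real.tan_eq_sin_div_cos]
  have heq : x / (Real.sin x / Real.cos x) = x * Real.cos x / Real.sin x := by
    field_simp
  rw [heq]
  calc x * Real.cos x / Real.sin x ≤ 1 - x^2/3 := by
        rw [div_le_iff₀ hsin]; linarith
    _ < Real.exp (-x^2/3) := hexp
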